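/- Let u₀, …, u_{d−1} ∈ F^× satisfy u_i·ω^i = u_j·ω^j for all 0 ≤ i, j ≤ d − 1. Then the map f : E → E, f(x) = Σ_{i=0}^{d−1} u_i · A_i(x)^{q^d − 2}, is an involution of E, i.e. f(f(x)) = x for all x ∈ E. -/

import Mathlib

/-- The linearized polynomial map `A_i(x) = ∑_{k=0}^{d-1} ω^{i k} x^{q^{d-1-k}}`. -/
def AMap (q d : ℕ) {F E : Type*} [Field F] [Field E] [Algebra F E]
    (ω : F) (i : ℕ) (x : E) : E :=
  ∑ k ∈ Finset.range d, (algebraMap F E ω) ^ (i * k) * x ^ (q ^ (d - 1 - k))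

private lemma aux_inv {E : Type*} [Field E] (a b c A : E) (ha : a ≠ 0) (hb : b ≠ 0) :
    (b * (b * a)) * (a * b * c * A⁻¹)⁻¹ = c⁻¹ * (b * A) := by
  rcases eq_or_ne A 0 with rfl | hA
  · simp
  · rcases eq_or_ne c 0 with rfl | hc
    · simp
    · field_simp

theorem sum_AMap_pow_involution
    (q d : ℕ) (hd : 1 < d) (hq : q % d = 1)
    (F E : Type*) [Field F] [Field E] [Algebra F E] [Fintype F] [Fintype E]
    (hF : Fintype.card F = q) (hE : Fintype.card E = q ^ d)
    (ω : F) (hω : orderOf ω = d)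
    (u : ℕ → F) (hu : ∀ i < d, u i ≠ 0)
    (huω : ∀ i < d, ∀ j < d, u i * ω ^ i = u j * ω ^ j) :
    ∀ x : E,
      (fun y : E => ∑ i ∈ Finset.range d,
          algebraMap F E (u i) * (AMap q d ω i y) ^ (q ^ d - 2))
        ((fun y : E => ∑ i ∈ Finset.range d,
          algebraMap F E (u i) * (AMap q d ω i y) ^ (q ^ d - 2)) x) = x := by
  intro x
  have hd0 : 0 < d := by omega
  have hq2 : 1 < q := by have := Fintype.one_lt_card (α := F); omega
  have hq4 : 4 ≤ q ^ d := by
    calc (4:ℕ) = 2 ^ 2 := by norm_num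
    _ ≤ q ^ 2 := Nat.pow_le_pow_left hq2 2
    _ ≤ q ^ d := Nat.pow_le_pow_right (by omega) hd
  have hinj : Function.Injective (algebraMap F E) := (algebraMap F E).injective
  have AMap_def : ∀ (i : ℕ) (z : E), AMap q d ω i z
      = ∑ k ∈ Finset.range d, (algebraMap F E ω) ^ (i * k) * z ^ q ^ (d - 1 - k) :=
    fun i z => rfl
  have hωd : ω ^ d = 1 := by rw [← hω]; exact pow_orderOf_eq_one ω
  have hω0 : ω ≠ 0 := by
    intro h
    rw [h, zero_pow (by omega : d ≠ 0)] at hωd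
    exact zero_ne_one hωd
  have hωEd : (algebraMap F E ω) ^ d = 1 := by rw [← map_pow, hωd, map_one]
  have hωE0 : algebraMap F E ω ≠ 0 := fun h => hω0 ((map_eq_zero_iff _ hinj).mp h)
  have hmod : ∀ a : ℕ, (algebraMap F E ω) ^ a = (algebraMap F E ω) ^ (a % d) := by
    intro a
    conv_lhs => rw [← Nat.div_add_mod a d]
    rw [pow_add, pow_mul, hωEd, one_pow, one_mul]
  have hcong : ∀ a b : ℕ, a % d = b % d →
      (algebraMap F E ω) ^ a = (algebraMap F E ω) ^ b := by
    intro a b h; rw [hmod a, hmod b, h]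
  -- characteristic
  haveI hpF : CharP F (ringChar F) := ringChar.charP F
  have hpp : (ringChar F).Prime := CharP.char_is_prime F (ringChar F)
  haveI : Fact (ringChar F).Prime := ⟨hpp⟩
  obtain ⟨n, -, hn⟩ := FiniteField.card F (ringChar F)
  haveI hpE : CharP E (ringChar F) := charP_of_injective_algebraMap hinj (ringChar F)
  have hqpn : q = ringChar F ^ (n : ℕ) := by rw [← hF, hn]
  have hsum_pow : ∀ (t : ℕ) (s : Finset ℕ) (g : ℕ → E),
      (∑ i ∈ s, g i) ^ q ^ t = ∑ i ∈ s, g i ^ q ^ t := by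
    intro t s g
    have h : ∀ z : E, z ^ q ^ t = iterateFrobenius E (ringChar F) ((n:ℕ) * t) z := by
      intro z
      rw [iterateFrobenius_def, hqpn, ← pow_mul]
    simp_rw [h]
    exact map_sum (iterateFrobenius E (ringChar F) ((n:ℕ)*t)) g s
  have halg_pow : ∀ (c : F) (t : ℕ), (algebraMap F E c) ^ q ^ t = algebraMap F E c := by
    intro c t
    rw [← map_pow]
    congr 1
    calc c ^ q ^ t = c ^ (Fintype.card F) ^ t := by rw [hF]
    _ = c := FiniteField.pow_card_pow t c
  have hωEq : (algebraMap F E ω) ^ q = algebraMap F E ω := by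
    have := halg_pow ω 1; rwa [pow_one] at this
  have hωEpowq : ∀ m : ℕ, ((algebraMap F E ω) ^ m) ^ q = (algebraMap F E ω) ^ m := by
    intro m; rw [← pow_mul, mul_comm, pow_mul, hωEq]
  have hxqd : ∀ z : E, z ^ q ^ d = z := by
    intro z
    calc z ^ q ^ d = z ^ Fintype.card E := by rw [hE]
    _ = z := FiniteField.pow_card z
  have hinv_pow : ∀ z : E, z ^ (q ^ d - 2) = z⁻¹ := by
    intro z
    rcases eq_or_ne z 0 with rfl | hz
    · rw [inv_zero, zero_pow (by omega : q ^ d - 2 ≠ 0)]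
    · have h1 : z ^ (q ^ d - 1) = 1 := by
        rw [← hE]; exact FiniteField.pow_card_sub_one_eq_one z hz
      refine eq_inv_of_mul_eq_one_left ?_
      calc z ^ (q ^ d - 2) * z = z ^ (q ^ d - 2 + 1) := (pow_succ z _).symm
      _ = 1 := by rw [(by omega : q ^ d - 2 + 1 = q ^ d - 1), h1]
  -- d invertible in E
  have hdvd : d ∣ q - 1 := by
    rw [← hω]
    apply orderOf_dvd_of_pow_eq_one
    calc ω ^ (q - 1) = ω ^ (Fintype.card F - 1) := by rw [hF]
    _ = 1 := FiniteField.pow_card_sub_one_eq_one ω hω0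
  have hdE : (d : E) ≠ 0 := by
    intro h
    have hpd : ringChar F ∣ d := (CharP.cast_eq_zero_iff E (ringChar F) d).mp h
    have hpq : ringChar F ∣ q := by
      rw [hqpn]; exact dvd_pow_self _ n.ne_zero
    have h1 : ringChar F ∣ 1 := by
      have := Nat.dvd_sub hpq (hpd.trans hdvd)
      rwa [(by omega : q - (q - 1) = 1)] at this
    exact absurd (Nat.dvd_one.mp h1) hpp.ne_one
  -- geometric sums
  have hgeom : ∀ m : ℕ, (∑ k ∈ Finset.range d, ((algebraMap F E ω) ^ m) ^ k)
      = if d ∣ m then (d : E) else 0 := by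
    intro m
    by_cases hdm : d ∣ m
    · obtain ⟨c, rfl⟩ := hdm
      rw [if_pos ⟨c, rfl⟩]
      have h1 : (algebraMap F E ω) ^ (d * c) = 1 := by rw [pow_mul, hωEd, one_pow]
      simp [h1]
    · rw [if_neg hdm]
      have hne : (algebraMap F E ω) ^ m ≠ 1 := by
        intro h
        apply hdm
        rw [← hω]
        apply orderOf_dvd_of_pow_eq_one
        apply hinj
        rw [map_pow, map_one]
        exact h
      rw [geom_sum_eq hne, ← pow_mul, mul_comm m d, pow_mul, hωEd, one_pow, sub_self,
        zero_div]
  -- eigenvector property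
  have heig : ∀ (i : ℕ) (y : E),
      (AMap q d ω i y) ^ q = (algebraMap F E ω) ^ i * AMap q d ω i y := by
    intro i y
    have h1 : (AMap q d ω i y) ^ q
        = ∑ k ∈ Finset.range d, (algebraMap F E ω) ^ (i * k) * y ^ q ^ (d - k) := by
      rw [AMap_def]
      have hs := hsum_pow 1 (Finset.range d)
        (fun k => (algebraMap F E ω) ^ (i*k) * y ^ q ^ (d-1-k))
      rw [pow_one] at hs
      rw [hs]
      refine Finset.sum_congr rfl fun k hk => ?_
      have hk' := Finset.mem_range.mp hk
      rw [mul_pow, hωEpowq, ← pow_mul, ← pow_succ]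
      have h3 : d - 1 - k + 1 = d - k := by omega
      rw [h3]
    have h2 : (algebraMap F E ω) ^ i * AMap q d ω i y
        = ∑ k ∈ Finset.range d, (algebraMap F E ω) ^ (i * (k+1)) * y ^ q ^ (d - 1 - k) := by
      rw [AMap_def, Finset.mul_sum]
      refine Finset.sum_congr rfl fun k hk => ?_
      rw [← mul_assoc, ← pow_add]
      have h4 : i + i * k = i * (k + 1) := by ring
      rw [h4]
    rw [h1, h2]
    obtain ⟨m, rfl⟩ := Nat.exists_eq_succ_of_ne_zero (by omega : d ≠ 0)
    rw [Finset.sum_range_succ', Finset.sum_range_succ]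
    congr 1
    · refine Finset.sum_congr rfl fun k hk => ?_
      have h3 : m + 1 - (k+1) = m + 1 - 1 - k := by omega
      rw [h3]
    · rw [Nat.mul_zero, pow_zero, one_mul, Nat.sub_zero, hxqd,
        (by omega : m + 1 - 1 - m = 0), pow_zero, pow_one,
        mul_comm i (m+1), pow_mul, hωEd, one_pow, one_mul]
  -- iterated eigenvector property
  have heigT : ∀ (em t : ℕ) (y : E), y ^ q = (algebraMap F E ω) ^ em * y →
      y ^ q ^ t = (algebraMap F E ω) ^ (em * t) * y := by
    intro em t y hy
    induction t with
    | zero => simp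
    | succ t ih =>
      have h5 : y ^ q ^ (t+1) = (y ^ q ^ t) ^ q := by rw [← pow_mul, pow_succ]
      rw [h5, ih, mul_pow, hωEpowq, hy, ← mul_assoc, ← pow_add,
        (by ring : em * t + em = em * (t+1))]
  have hpow_inv : ∀ a : ℕ,
      ((algebraMap F E ω) ^ a)⁻¹ = (algebraMap F E ω) ^ (a * (d-1)) := by
    intro a
    refine inv_eq_of_mul_eq_one_right ?_
    rw [← pow_add]
    have h : a + a * (d-1) = d * a := by
      have h1 : 1 + (d-1) = d := by omega
      calc a + a * (d-1) = a * (1 + (d-1)) := by ring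
      _ = a * d := by rw [h1]
      _ = d * a := by ring
    rw [h, pow_mul, hωEd, one_pow]
  -- modular exponent arithmetic
  have hmodeq : ∀ i j k : ℕ, k < d →
      (j * k + i * (d-1) * (d-1-k)) % d = (i + (i+j) * k) % d := by
    intro i j k hk
    have h1 : 1 ≤ d := by omega
    have h2 : k ≤ d - 1 := by omega
    have e1 : ((d - 1 : ℕ) : ZMod d) = -1 := by
      rw [Nat.cast_sub h1, ZMod.natCast_self, Nat.cast_one, zero_sub]
    have e2 : ((d - 1 - k : ℕ) : ZMod d) = -1 - (k : ZMod d) := by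
      rw [Nat.cast_sub h2, e1]
    have hz : ((j * k + i * (d-1) * (d-1-k) : ℕ) : ZMod d)
        = ((i + (i+j) * k : ℕ) : ZMod d) := by
      push_cast [e1, e2]
      ring
    exact (ZMod.natCast_eq_natCast_iff _ _ _).mp hz
  -- the sum identity ∑ ω^i A_i z = d z
  have hsum_id : ∀ z : E,
      ∑ i ∈ Finset.range d, (algebraMap F E ω) ^ i * AMap q d ω i z = (d:E) * z := by
    intro z
    have h1 : ∀ i ∈ Finset.range d, (algebraMap F E ω) ^ i * AMap q d ω i z
        = ∑ k ∈ Finset.range d, (algebraMap F E ω) ^ (i * (k+1)) * z ^ q ^ (d-1-k) := by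
      intro i hi
      rw [AMap_def, Finset.mul_sum]
      refine Finset.sum_congr rfl fun k hk => ?_
      rw [← mul_assoc, ← pow_add, (by ring : i + i * k = i * (k+1))]
    rw [Finset.sum_congr rfl h1, Finset.sum_comm]
    have h2 : ∀ k ∈ Finset.range d,
        (∑ i ∈ Finset.range d, (algebraMap F E ω) ^ (i * (k+1)) * z ^ q ^ (d-1-k))
        = (if d ∣ (k+1) then (d:E) else 0) * z ^ q ^ (d-1-k) := by
      intro k hk
      rw [← Finset.sum_mul]
      congr 1
      rw [← hgeom (k+1)]
      refine Finset.sum_congr rfl fun i hi => ?_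
      rw [← pow_mul, (by ring : i * (k+1) = (k+1) * i)]
    rw [Finset.sum_congr rfl h2, Finset.sum_eq_single (d-1)]
    · rw [if_pos (show d ∣ d - 1 + 1 from ⟨1, by omega⟩),
        (by omega : d - 1 - (d-1) = 0), pow_zero, pow_one]
    · intro k hk hne
      have hk' := Finset.mem_range.mp hk
      have hnd : ¬ d ∣ (k + 1) := by
        intro hdd
        have := Nat.le_of_dvd (Nat.succ_pos k) hdd
        omega
      rw [if_neg hnd, zero_mul]
    · intro h
      exact absurd (Finset.mem_range.mpr (by omega : d - 1 < d)) h
  -- the pairing map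
  set σ : ℕ → ℕ := fun j => if j = 0 then 0 else d - j with hσdef
  have hσlt : ∀ j, j < d → σ j < d := by
    intro j hj
    simp only [hσdef]
    split <;> omega
  have hσdvd : ∀ j, j < d → d ∣ σ j + j := by
    intro j hj
    simp only [hσdef]
    split
    · rename_i h; subst h; simp
    · rename_i h
      rw [(by omega : d - j + j = d)]
  have hσid : ∀ j, j < d → (algebraMap F E ω) ^ (σ j) * (algebraMap F E ω) ^ j = 1 := by
    intro j hj
    rw [← pow_add]
    obtain ⟨c, hc⟩ := hσdvd j hj
    rw [hc, pow_mul, hωEd, one_pow]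
  have hσσ : ∀ j, j < d → σ (σ j) = j := by
    intro j hj
    by_cases h0 : j = 0
    · subst h0; simp [hσdef]
    · simp only [hσdef]
      rw [if_neg h0, if_neg (by omega : ¬ d - j = 0)]
      omega
  -- main computation
  simp only [hinv_pow]
  set Y := ∑ i ∈ Finset.range d, algebraMap F E (u i) * (AMap q d ω i x)⁻¹ with hYdef
  have hB : ∀ i : ℕ, ((AMap q d ω i x)⁻¹) ^ q
      = (algebraMap F E ω) ^ (i * (d-1)) * (AMap q d ω i x)⁻¹ := by
    intro i
    rw [inv_pow, heig, mul_inv, hpow_inv]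
  have hYpow : ∀ t : ℕ, Y ^ q ^ t = ∑ i ∈ Finset.range d,
      (algebraMap F E ω) ^ (i * (d-1) * t)
        * (algebraMap F E (u i) * (AMap q d ω i x)⁻¹) := by
    intro t
    rw [hYdef, hsum_pow]
    refine Finset.sum_congr rfl fun i hi => ?_
    rw [mul_pow, halg_pow, heigT (i * (d-1)) t _ (hB i)]
    ring
  have hAj : ∀ j, j < d → AMap q d ω j Y
      = algebraMap F E (u (σ j)) * (algebraMap F E ω) ^ (σ j) * (d : E)
        * (AMap q d ω (σ j) x)⁻¹ := by
    intro j hj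
    rw [AMap_def j Y]
    simp only [hYpow]
    have hswap : (∑ k ∈ Finset.range d, (algebraMap F E ω) ^ (j*k) *
        (∑ i ∈ Finset.range d, (algebraMap F E ω) ^ (i*(d-1)*(d-1-k))
          * (algebraMap F E (u i) * (AMap q d ω i x)⁻¹)))
        = ∑ i ∈ Finset.range d,
            (∑ k ∈ Finset.range d, (algebraMap F E ω) ^ (j*k + i*(d-1)*(d-1-k)))
            * (algebraMap F E (u i) * (AMap q d ω i x)⁻¹) := by
      simp_rw [Finset.mul_sum]
      rw [Finset.sum_comm]
      simp_rw [Finset.sum_mul]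
      refine Finset.sum_congr rfl fun i hi => Finset.sum_congr rfl fun k hk => ?_
      rw [← mul_assoc, ← pow_add]
    rw [hswap]
    have hstep : ∀ i ∈ Finset.range d,
        (∑ k ∈ Finset.range d, (algebraMap F E ω) ^ (j*k + i*(d-1)*(d-1-k)))
        = (algebraMap F E ω) ^ i * (if d ∣ (i+j) then (d:E) else 0) := by
      intro i hi
      rw [← hgeom (i+j), Finset.mul_sum]
      refine Finset.sum_congr rfl fun k hk => ?_
      rw [← pow_mul, ← pow_add]
      exact hcong _ _ (hmodeq i j k (Finset.mem_range.mp hk))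
    rw [Finset.sum_congr rfl fun i hi => by rw [hstep i hi]]
    rw [Finset.sum_eq_single (σ j)]
    · rw [if_pos (hσdvd j hj)]
      ring
    · intro i hi hne
      have hi' := Finset.mem_range.mp hi
      have hnd : ¬ d ∣ (i + j) := by
        intro hdd
        obtain ⟨c, hc⟩ := hdd
        have hc2 : c < 2 := by
          rcases Nat.lt_or_ge c 2 with h | h
          · exact h
          · exfalso
            have : d * 2 ≤ d * c := Nat.mul_le_mul_left d h
            omega
        interval_cases c
        · apply hne
          have hj0 : j = 0 := by omega
          have hi0 : i = 0 := by omega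
          subst hj0; subst hi0; simp [hσdef]
        · apply hne
          simp only [hσdef]
          rw [if_neg (by omega : ¬ j = 0)]
          omega
      rw [if_neg hnd, mul_zero, zero_mul]
    · intro h
      exact absurd (Finset.mem_range.mpr (hσlt j hj)) h
  have hterm : ∀ j, j < d →
      algebraMap F E (u j) * (AMap q d ω j Y)⁻¹
      = (d : E)⁻¹ * ((algebraMap F E ω) ^ (σ j) * AMap q d ω (σ j) x) := by
    intro j hj
    have hu1 : algebraMap F E (u (σ j)) ≠ 0 :=
      fun h => hu (σ j) (hσlt j hj) ((map_eq_zero_iff _ hinj).mp h)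
    have hω1 : (algebraMap F E ω) ^ (σ j) ≠ 0 := pow_ne_zero _ hωE0
    have h2 : algebraMap F E (u j)
        = (algebraMap F E ω) ^ (σ j)
          * ((algebraMap F E ω) ^ (σ j) * algebraMap F E (u (σ j))) := by
      have key : algebraMap F E (u j) * (algebraMap F E ω) ^ j
          = algebraMap F E (u (σ j)) * (algebraMap F E ω) ^ (σ j) := by
        have h6 := huω j hj (σ j) (hσlt j hj)
        calc algebraMap F E (u j) * (algebraMap F E ω) ^ j
            = algebraMap F E (u j * ω ^ j) := by rw [map_mul, map_pow]
        _ = algebraMap F E (u (σ j) * ω ^ (σ j)) := by rw [h6]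
        _ = _ := by rw [map_mul, map_pow]
      calc algebraMap F E (u j)
          = algebraMap F E (u j)
            * ((algebraMap F E ω) ^ (σ j) * (algebraMap F E ω) ^ j) := by
            rw [hσid j hj, mul_one]
      _ = (algebraMap F E (u j) * (algebraMap F E ω) ^ j)
            * (algebraMap F E ω) ^ (σ j) := by ring
      _ = (algebraMap F E (u (σ j)) * (algebraMap F E ω) ^ (σ j))
            * (algebraMap F E ω) ^ (σ j) := by rw [key]
      _ = _ := by ring
    rw [hAj j hj, h2]
    exact aux_inv _ _ _ _ hu1 hω1
  calc ∑ j ∈ Finset.range d, algebraMap F E (u j) * (AMap q d ω j Y)⁻¹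
      = ∑ j ∈ Finset.range d,
          (d:E)⁻¹ * ((algebraMap F E ω) ^ (σ j) * AMap q d ω (σ j) x) :=
        Finset.sum_congr rfl fun j hj => hterm j (Finset.mem_range.mp hj)
  _ = (d:E)⁻¹ * ∑ j ∈ Finset.range d,
        (algebraMap F E ω) ^ (σ j) * AMap q d ω (σ j) x := by
      rw [Finset.mul_sum]
  _ = (d:E)⁻¹ * ∑ i ∈ Finset.range d, (algebraMap F E ω) ^ i * AMap q d ω i x := by
      congr 1
      refine Finset.sum_nbij' σ σ ?_ ?_ ?_ ?_ ?_
      · intro a ha; exact Finset.mem_range.mpr (hσlt a (Finset.mem_range.mp ha))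
      · intro a ha; exact Finset.mem_range.mpr (hσlt a (Finset.mem_range.mp ha))
      · intro a ha; exact hσσ a (Finset.mem_range.mp ha)
      · intro a ha; exact hσσ a (Finset.mem_range.mp ha)
      · intro a ha; rfl
  _ = (d:E)⁻¹ * ((d:E) * x) := by rw [hsum_id x]
  _ = x := by rw [← mul_assoc, inv_mul_cancel₀ hdE, one_mul]
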